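/- Under the bijection between secondary structures with at least one link and weighted rooted plane trees (weights on corners giving segment free-element counts and weights on edges giving stem lengths), the sequence length satisfies n = 2|E| + 2W_e + W_c, where |E| is the number of tree edges, W_e is the total edge weight, and W_c is the total corner weight. -/
import Mathlib


/-- Symbols of the dot-bracket representation of a secondary structure. -/
inductive RSym where
  | dot | op | cl
deriving DecidableEq

/-- Weighted rooted plane trees: `node w cs ks` has weight `w` on the edge to
its parent (ignored at the root), children `cs`, and the list `ks` of corner
weights (one for each of its `|cs| + 1` corners, in planar order).  The edge
weight `w` records the stem length (a stem of edge-weight `w` consists of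
`w + 1` links) and corner weights record numbers of free elements of the
corresponding segments. -/
inductive WTree where
  | node : ℕ → List WTree → List ℕ → WTree

namespace WTree

def edgeW : WTree → ℕ
  | .node w _ _ => w

/-- Number of edges `|E|`. -/
def numEdges : WTree → ℕ
  | .node _ cs _ => cs.length + (cs.attach.map (fun c => numEdges c.1)).sum
decreasing_by
  have := List.sizeOf_lt_of_mem c.2
  simp only [WTree.node.sizeOf_spec]; omega

/-- Total weight `W_e` over all edges. -/
def edgeWSum : WTree → ℕ
  | .node _ cs _ => (cs.attach.map (fun c => c.1.edgeW + edgeWSum c.1)).sum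
decreasing_by
  have := List.sizeOf_lt_of_mem c.2
  simp only [WTree.node.sizeOf_spec]; omega

/-- Total weight `W_c` over all corners. -/
def cornerWSum : WTree → ℕ
  | .node _ cs ks => ks.sum + (cs.attach.map (fun c => cornerWSum c.1)).sum
decreasing_by
  have := List.sizeOf_lt_of_mem c.2
  simp only [WTree.node.sizeOf_spec]; omega

mutual
/-- The dot-bracket word of the secondary structure corresponding to a
weighted rooted plane tree (via the stem/segment-reduction duality): a stem of
edge weight `w` contributes `w + 1` opening and `w + 1` closing parentheses,
and a corner of weight `k` contributes `k` dots (free elements). -/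
def word : WTree → List RSym
  | .node _ cs ks => List.replicate ks.headI RSym.dot ++ wordL cs ks.tail

def wordL : List WTree → List ℕ → List RSym
  | [], _ => []
  | c :: cs, ks =>
      List.replicate (c.edgeW + 1) RSym.op ++ word c
        ++ List.replicate (c.edgeW + 1) RSym.cl
        ++ List.replicate ks.headI RSym.dot ++ wordL cs ks.tail
end

end WTree



/-- Well-formedness: every node has exactly (arity + 1) corner weights. -/
inductive WellFormed : WTree → Prop
  | node (w : ℕ) (cs : List WTree) (ks : List ℕ) :
      ks.length = cs.length + 1 →
      (∀ c ∈ cs, WellFormed c) →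
      WellFormed (.node w cs ks)


lemma sum_attach_map {α : Type*} (l : List α) (f : α → ℕ) :
    (l.attach.map (fun c => f c.1)).sum = (l.map f).sum := by
  induction l with
  | nil => rfl
  | cons a l ihl => simp [List.attach_cons, List.map_map, Function.comp_def, ← ihl]

lemma sum_split (cs : List WTree) :
    (cs.map (fun c => 2 * (c.edgeW + 1) + 2 * c.numEdges + 2 * c.edgeWSum
      + c.cornerWSum)).sum
    = 2 * cs.length + 2 * (cs.map WTree.numEdges).sum
      + 2 * (cs.map (fun c => c.edgeW + WTree.edgeWSum c)).sum
      + (cs.map WTree.cornerWSum).sum := by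
  induction cs with
  | nil => simp
  | cons c cs ihc =>
    simp only [List.map_cons, List.sum_cons, List.length_cons, ihc]; ring

lemma wordL_length (cs : List WTree) (ks : List ℕ)
    (hlen : ks.length = cs.length)
    (iht : ∀ c ∈ cs,
      (c.word).length = 2 * c.numEdges + 2 * c.edgeWSum + c.cornerWSum) :
    (WTree.wordL cs ks).length =
      (cs.map (fun c => 2 * (c.edgeW + 1) + 2 * c.numEdges + 2 * c.edgeWSum
        + c.cornerWSum)).sum + ks.sum := by
  induction cs generalizing ks with
  | nil =>
    have : ks = [] := List.length_eq_zero_iff.mp (by simpa using hlen)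
    simp [WTree.wordL, this]
  | cons c cs ihc =>
    obtain ⟨k, ks', rfl⟩ : ∃ k ks', ks = k :: ks' := by
      cases ks with
      | nil => simp at hlen
      | cons a b => exact ⟨a, b, rfl⟩
    have h1 := iht c (by simp)
    have h2 := ihc ks' (by simpa using hlen) (fun x hx => iht x (by simp [hx]))
    simp only [WTree.wordL, List.length_append, List.length_replicate, h1, h2,
      List.headI, List.tail, List.map_cons, List.sum_cons]
    omega

lemma WTree.word_length : ∀ (n : ℕ) (T : WTree), sizeOf T ≤ n → WellFormed T →
    (T.word).length = 2 * T.numEdges + 2 * T.edgeWSum + T.cornerWSum := by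
  intro n
  induction n using Nat.strong_induction_on with
  | _ n ih =>
    rintro ⟨w, cs, ks⟩ hs hwf
    rcases hwf with ⟨_, _, _, hlen, hwf⟩
    obtain ⟨k, ks', rfl⟩ : ∃ k ks', ks = k :: ks' := by
      cases ks with
      | nil => simp at hlen
      | cons a b => exact ⟨a, b, rfl⟩
    simp only [WTree.node.sizeOf_spec] at hs
    have hL := wordL_length cs ks' (by simpa using hlen) (fun c hc => by
      have hlt := List.sizeOf_lt_of_mem hc
      exact ih (n - 1) (by omega) c (by omega) (hwf c hc))
    simp only [WTree.word, List.length_append, List.length_replicate, List.headI,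
      List.tail, WTree.numEdges, WTree.edgeWSum, WTree.cornerWSum, List.sum_cons]
    rw [hL, sum_split, sum_attach_map cs WTree.numEdges,
      sum_attach_map cs (fun c => c.edgeW + WTree.edgeWSum c),
      sum_attach_map cs WTree.cornerWSum]
    omega

/-- Under the duality between secondary structures and weighted rooted plane
trees, the length `n` of the underlying sequence equals
`2|E| + 2 W_e + W_c`. -/
theorem length_eq_two_numEdges_add_two_edgeWSum_add_cornerWSum
    (T : WTree) (hT : WellFormed T) :
    (T.word).length = 2 * T.numEdges + 2 * T.edgeWSum + T.cornerWSum := by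
  exact WTree.word_length (sizeOf T) T le_rfl hT
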